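/- Let k be a field, R the quotient of a polynomial ring over k by a homogeneous prime ideal, m its maximal homogeneous ideal, and assume depth(R_m) ≥ 2. Let I ⊆ R be a homogeneous ideal with ht I ≥ 1. Then there exists an integer e > 0 (any integer exceeding the degrees of a set of homogeneous generators of I and the Swanson linear bound for I) such that for all n ≥ 1: λ(H^0_m(R/I^n)) = Σ_{m=0}^{en} dim_k ((I^n)^*)_m − Σ_{m=0}^{en} dim_k (I^n)_m, where (I^n)^* = (I^n : m^∞) is the saturation of I^n. -/

import Mathlib

/-!
STATEMENT 13: Let `k` be a field, `R` the quotient of a polynomial ring over `k` by a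
homogeneous prime ideal, `m` its maximal homogeneous ideal, and assume `depth(R_m) ≥ 2`.
Let `I ⊆ R` be a homogeneous ideal with `ht I ≥ 1`.  Then there exists an integer `e > 0`
(any integer exceeding the degrees of a set of homogeneous generators of `I` and the Swanson
linear bound for `I`) such that for all `n ≥ 1`:
`λ(H⁰_m(R/Iⁿ)) = Σ_{m=0}^{en} dim_k ((Iⁿ)^*)_m − Σ_{m=0}^{en} dim_k (Iⁿ)_m`,
where `(Iⁿ)^* = (Iⁿ : m^∞)` is the saturation of `Iⁿ`.

`R` is modelled as a finitely generated standard ℕ-graded `k`-algebra domain; `m` is the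
irrelevant ideal; `depth(R_m) ≥ 2` is expressed by a length-two regular sequence on `R`
inside `m`; `H⁰_m` is the `m`-power-torsion functor and `λ` is the `k`-dimension.
-/

open Filter

/-- The zeroth local cohomology module `H⁰_J(M) = {x ∈ M | ∃ n, Jⁿ • x = 0}`. -/
noncomputable def H0 {R M : Type*} [CommRing R] [AddCommGroup M] [Module R M]
    (J : Ideal R) : Submodule R M :=
  ⨆ n : ℕ, Submodule.torsionBySet R M (J ^ n : Ideal R)

/-- The saturation `(I : J^∞) = ⋃ j (I : J^j)` of `I` with respect to `J`. -/
noncomputable def sat {R : Type*} [CommRing R] (I J : Ideal R) : Ideal R :=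
  ⨆ j : ℕ, Submodule.colon (I : Submodule R R) (J ^ j : Ideal R)

/-- Height of an ideal: the infimum of the heights of the primes containing it. -/
noncomputable def idealHeight {R : Type*} [CommRing R] (I : Ideal R) : ℕ∞ :=
  ⨅ (p : PrimeSpectrum R) (_ : I ≤ p.asIdeal), Order.height p

/-- The degree-`i` graded piece of an ideal `N` of a graded algebra, as a `k`-submodule. -/
noncomputable def piece {k R : Type*} [Field k] [CommRing R] [Algebra k R]
    (𝒜 : ℕ → Submodule k R) (N : Ideal R) (i : ℕ) : Submodule k R :=
  (Submodule.restrictScalars k (N : Submodule R R)) ⊓ 𝒜 i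

open DirectSum Polynomial Pointwise



section Aux
variable {k : Type} [Field k] {R : Type} [CommRing R] [Algebra k R]
variable (𝒜 : ℕ → Submodule k R) [GradedAlgebra 𝒜]

lemma span_A1_le_irr : Ideal.span (𝒜 1 : Set R) ≤ (HomogeneousIdeal.irrelevant 𝒜).toIdeal := by
  rw [Ideal.span_le]
  intro x hx
  show x ∈ (HomogeneousIdeal.irrelevant 𝒜)
  rw [HomogeneousIdeal.mem_irrelevant_iff]
  exact DirectSum.decompose_of_mem_ne 𝒜 hx one_ne_zero

lemma closure_grade (x : R) (hx : x ∈ Submonoid.closure (𝒜 1 : Set R)) :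
    ∃ ℓ : ℕ, x ∈ 𝒜 ℓ ∧ x ∈ ((Ideal.span (𝒜 1 : Set R)) ^ ℓ : Ideal R) := by
  induction hx using Submonoid.closure_induction with
  | mem a ha => exact ⟨1, ha, by simpa using Ideal.subset_span ha⟩
  | one => exact ⟨0, SetLike.one_mem_graded 𝒜, by simp⟩
  | mul a b _ _ iha ihb =>
      obtain ⟨ℓa, h1a, h2a⟩ := iha
      obtain ⟨ℓb, h1b, h2b⟩ := ihb
      exact ⟨ℓa + ℓb, SetLike.mul_mem_graded h1a h1b,
        by rw [pow_add]; exact Ideal.mul_mem_mul h2a h2b⟩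

lemma piece_mem_span_pow (hstd : Algebra.adjoin k (𝒜 1 : Set R) = ⊤)
    (t : ℕ) (x : R) (hx : x ∈ 𝒜 t) :
    x ∈ ((Ideal.span (𝒜 1 : Set R)) ^ t : Ideal R) := by
  have hx' : x ∈ Submodule.span k (Submonoid.closure (𝒜 1 : Set R) : Set R) := by
    rw [← Algebra.adjoin_eq_span, hstd]; trivial
  have key : ∀ y ∈ Submodule.span k (Submonoid.closure (𝒜 1 : Set R) : Set R),
      (DirectSum.decompose 𝒜 y t : R) ∈ ((Ideal.span (𝒜 1 : Set R)) ^ t : Ideal R) := by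
    intro y hy
    induction hy using Submodule.span_induction with
    | mem a ha =>
        obtain ⟨ℓ, h1, h2⟩ := closure_grade 𝒜 a ha
        by_cases hℓ : ℓ = t
        · subst hℓ
          rwa [DirectSum.decompose_of_mem_same 𝒜 h1]
        · rw [DirectSum.decompose_of_mem_ne 𝒜 h1 hℓ]
          exact Ideal.zero_mem _
    | zero => rw [DirectSum.decompose_zero]; simpa using Ideal.zero_mem _
    | add a b _ _ iha ihb =>
        rw [DirectSum.decompose_add]
        simpa using Ideal.add_mem _ iha ihb
    | smul c a _ iha =>
        have : (DirectSum.decompose 𝒜 (c • a) t : R) = c • (DirectSum.decompose 𝒜 a t : R) := by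
          rw [DirectSum.decompose_smul]; rfl
        rw [this]
        exact Submodule.smul_of_tower_mem _ c iha
  have := key x hx'
  rwa [DirectSum.decompose_of_mem_same 𝒜 hx] at this

/-- A piece of degree `t ≥ N` is inside `m^N`. -/
lemma piece_le_irr_pow (hstd : Algebra.adjoin k (𝒜 1 : Set R) = ⊤)
    {t N : ℕ} (h : N ≤ t) (x : R) (hx : x ∈ 𝒜 t) :
    x ∈ ((HomogeneousIdeal.irrelevant 𝒜).toIdeal ^ N : Ideal R) := by
  have h1 := piece_mem_span_pow 𝒜 hstd t x hx
  have h2 : ((Ideal.span (𝒜 1 : Set R)) ^ t : Ideal R) ≤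
      (HomogeneousIdeal.irrelevant 𝒜).toIdeal ^ N :=
    le_trans (Ideal.pow_right_mono (span_A1_le_irr 𝒜) t) (Ideal.pow_le_pow_right h)
  exact h2 h1

end Aux
section Aux2
variable {k : Type} [Field k] {R : Type} [CommRing R] [Algebra k R]
variable (𝒜 : ℕ → Submodule k R) [GradedAlgebra 𝒜]

lemma colon_pow_mono (P J : Ideal R) : Monotone (fun j : ℕ =>
    Submodule.colon (P : Submodule R R) (J ^ j : Ideal R)) := by
  intro a b hab
  intro r hr
  rw [Submodule.mem_colon] at hr ⊢
  intro p hp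
  exact hr p (Ideal.pow_le_pow_right hab hp)

lemma mem_sat_iff {P J : Ideal R} {x : R} :
    x ∈ sat P J ↔ ∃ N : ℕ, ∀ p ∈ (J ^ N : Ideal R), x * p ∈ P := by
  rw [sat, Submodule.mem_iSup_of_directed _ (colon_pow_mono P J).directed_le]
  refine exists_congr fun N => ?_
  rw [Submodule.mem_colon]
  refine forall₂_congr fun p _ => ?_
  rw [smul_eq_mul]

lemma self_le_sat (P J : Ideal R) : P ≤ sat P J := by
  intro x hx
  rw [mem_sat_iff]
  exact ⟨0, fun p _ => Ideal.mul_mem_right p _ hx⟩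

lemma sat_mono {P Q : Ideal R} (h : P ≤ Q) (J : Ideal R) : sat P J ≤ sat Q J := by
  intro x hx
  rw [mem_sat_iff] at hx ⊢
  obtain ⟨N, hN⟩ := hx
  exact ⟨N, fun p hp => h (hN p hp)⟩

lemma mul_mem_sat {P Q J : Ideal R} {x y : R} (hx : x ∈ Q) (hy : y ∈ sat P J) :
    x * y ∈ sat (Q * P) J := by
  rw [mem_sat_iff] at hy ⊢
  obtain ⟨N, hN⟩ := hy
  refine ⟨N, fun p hp => ?_⟩
  have : x * y * p = x * (y * p) := by ring
  rw [this]
  exact Ideal.mul_mem_mul hx (hN p hp)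

lemma colon_isHomogeneous {A B : Ideal R} (hA : A.IsHomogeneous 𝒜) (hB : B.IsHomogeneous 𝒜) :
    (Submodule.colon (A : Submodule R R) (B : Submodule R R)).IsHomogeneous 𝒜 := by
  intro i r hr
  rw [Submodule.mem_colon] at hr ⊢
  intro p hp
  classical
  have key : ∀ t : ℕ, (DirectSum.decompose 𝒜 r i : R) * (DirectSum.decompose 𝒜 p t : R) ∈ A := by
    intro t
    have h1 : r * (DirectSum.decompose 𝒜 p t : R) ∈ A := by
      have := hr (DirectSum.decompose 𝒜 p t : R) (hB t hp)
      rwa [smul_eq_mul] at this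
    have h2 := hA (i + t) h1
    rwa [DirectSum.coe_decompose_mul_of_right_mem_of_le 𝒜 (SetLike.coe_mem _)
      (Nat.le_add_left t i), Nat.add_sub_cancel] at h2
  have hsum : (DirectSum.decompose 𝒜 r i : R) * p =
      ∑ t ∈ (DirectSum.decompose 𝒜 p).support,
        (DirectSum.decompose 𝒜 r i : R) * (DirectSum.decompose 𝒜 p t : R) := by
    rw [← Finset.mul_sum]
    conv_lhs => rw [← DirectSum.sum_support_decompose 𝒜 p]
  rw [smul_eq_mul, hsum]
  exact Ideal.sum_mem _ fun t _ => key t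

lemma pow_isHomogeneous {P : Ideal R} (hP : P.IsHomogeneous 𝒜) (n : ℕ) :
    (P ^ n).IsHomogeneous 𝒜 := by
  induction n with
  | zero =>
      rw [pow_zero, Ideal.one_eq_top]
      intro i r _
      exact Submodule.mem_top
  | succ n ih =>
      rw [pow_succ]
      exact Ideal.IsHomogeneous.mul ih hP

lemma sat_isHomogeneous {P J : Ideal R} (hP : P.IsHomogeneous 𝒜) (hJ : J.IsHomogeneous 𝒜) :
    (sat P J).IsHomogeneous 𝒜 :=
  Ideal.IsHomogeneous.iSup fun j => colon_isHomogeneous 𝒜 hP (pow_isHomogeneous 𝒜 hJ j)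

end Aux2
section Aux3
variable {k : Type} [Field k] {R : Type} [CommRing R] [Algebra k R]
variable (𝒜 : ℕ → Submodule k R) [GradedAlgebra 𝒜]

/-- Component absorption: if `J` is spanned by homogeneous elements of degree `≤ D`, then any
degree-`j` component of an element of `J`, with `j ≥ D + N`, lies in `m^N * J`. -/
lemma absorb (hstd : Algebra.adjoin k (𝒜 1 : Set R) = ⊤)
    (T : Set R) (D N : ℕ) (hT : ∀ f ∈ T, ∃ δ ≤ D, f ∈ 𝒜 δ)
    (x : R) (hx : x ∈ Ideal.span T) (j : ℕ) (hj : D + N ≤ j) :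
    (DirectSum.decompose 𝒜 x j : R) ∈
      ((HomogeneousIdeal.irrelevant 𝒜).toIdeal ^ N * Ideal.span T : Ideal R) := by
  classical
  rw [Ideal.span, Submodule.mem_span_set] at hx
  obtain ⟨c, hsupp, hsum⟩ := hx
  subst hsum
  rw [Finsupp.sum]
  have hproj : (DirectSum.decompose 𝒜 (∑ f ∈ c.support, c f • f) j : R) =
      ∑ f ∈ c.support, (DirectSum.decompose 𝒜 (c f • f) j : R) := by
    have h1 : ∀ y : R, (DirectSum.decompose 𝒜 y j : R) = GradedRing.proj 𝒜 j y := by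
      intro y; rfl
    rw [h1, map_sum]
    exact Finset.sum_congr rfl fun f _ => (h1 _).symm
  rw [hproj]
  refine Ideal.sum_mem _ fun f hf => ?_
  obtain ⟨δ, hδD, hfδ⟩ := hT f (hsupp hf)
  have hδj : δ ≤ j := le_trans hδD (le_trans (Nat.le_add_right D N) hj)
  rw [smul_eq_mul, DirectSum.coe_decompose_mul_of_right_mem_of_le 𝒜 hfδ hδj]
  refine Ideal.mul_mem_mul ?_ (Ideal.subset_span (hsupp hf))
  refine piece_le_irr_pow 𝒜 hstd ?_ _ (SetLike.coe_mem _)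
  omega

/-- Elements of `T ^ s` are homogeneous of degree at most `d * s`. -/
lemma set_pow_degrees (T : Set R) (d : ℕ) (hT : ∀ f ∈ T, ∃ δ ≤ d, f ∈ 𝒜 δ) :
    ∀ s : ℕ, ∀ f ∈ (T ^ s : Set R), ∃ δ ≤ d * s, f ∈ 𝒜 δ := by
  intro s
  induction s with
  | zero =>
      intro f hf
      rw [pow_zero, Set.mem_one] at hf
      subst hf
      exact ⟨0, by omega, SetLike.one_mem_graded 𝒜⟩
  | succ s ih =>
      intro f hf
      rw [pow_succ] at hf
      obtain ⟨a, ha, b, hb, rfl⟩ := hf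
      obtain ⟨δa, hδa, haa⟩ := ih a ha
      obtain ⟨δb, hδb, hbb⟩ := hT b hb
      exact ⟨δa + δb, by rw [Nat.mul_succ]; omega, SetLike.mul_mem_graded haa hbb⟩

/-- Homogeneous generators of a f.g. homogeneous ideal together with their membership data. -/
lemma homog_gens {P : Ideal R} (hP : P.IsHomogeneous 𝒜) (hfg : P.FG) :
    ∃ s : Finset R, Ideal.span (↑s : Set R) = P ∧ ∀ f ∈ s, f ∈ P ∧ ∃ δ : ℕ, f ∈ 𝒜 δ := by
  classical
  obtain ⟨F, hF⟩ := hfg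
  refine ⟨F.biUnion fun g =>
      (DirectSum.decompose 𝒜 g).support.image fun δ => (DirectSum.decompose 𝒜 g δ : R),
    ?_, ?_⟩
  · apply le_antisymm
    · rw [Ideal.span_le]
      intro f hf
      simp only [Finset.coe_biUnion, Set.mem_iUnion, Finset.mem_coe, Finset.mem_image] at hf
      obtain ⟨g, hg, δ, _, rfl⟩ := hf
      exact hP δ (hF ▸ Ideal.subset_span hg)
    · rw [← hF, Ideal.span_le]
      intro g hg
      have : g = ∑ δ ∈ (DirectSum.decompose 𝒜 g).support, (DirectSum.decompose 𝒜 g δ : R) :=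
        (DirectSum.sum_support_decompose 𝒜 g).symm
      rw [this]
      refine Ideal.sum_mem _ fun δ hδ => Ideal.subset_span ?_
      simp only [Finset.coe_biUnion, Set.mem_iUnion, Finset.mem_coe, Finset.mem_image]
      exact ⟨g, hg, δ, hδ, rfl⟩
  · intro f hf
    simp only [Finset.mem_biUnion, Finset.mem_image] at hf
    obtain ⟨g, hg, δ, _, rfl⟩ := hf
    exact ⟨hP δ (hF ▸ Ideal.subset_span hg), δ, SetLike.coe_mem _⟩

end Aux3
section Aux4
variable {k : Type} [Field k] {R : Type} [CommRing R] [Algebra k R]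
variable (𝒜 : ℕ → Submodule k R) [GradedAlgebra 𝒜]

set_option maxHeartbeats 1000000 in
set_option synthInstance.maxHeartbeats 400000 in
/-- The key Swanson-type step, proved via Noetherianity of the Rees algebra. -/
lemma swanson_step (hstd : Algebra.adjoin k (𝒜 1 : Set R) = ⊤) [IsNoetherianRing R]
    (I : Ideal R) (hI : I.IsHomogeneous 𝒜)
    (T : Finset R) (hTspan : Ideal.span (↑T : Set R) = I)
    (d : ℕ) (hTdeg : ∀ f ∈ T, ∃ δ ≤ d, f ∈ 𝒜 δ) :
    ∃ C : ℕ, ∀ n i : ℕ, ∀ x : R, d * n + C ≤ i → x ∈ 𝒜 i → x ∈ I ^ n →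
      x ∈ sat (I ^ (n + 1)) (HomogeneousIdeal.irrelevant 𝒜).toIdeal → x ∈ I ^ (n + 1) := by
  classical
  set mI : Ideal R := (HomogeneousIdeal.irrelevant 𝒜).toIdeal with hmI
  have hmIhom : mI.IsHomogeneous 𝒜 := (HomogeneousIdeal.irrelevant 𝒜).isHomogeneous
  set S := reesAlgebra I with hS
  -- the ideal `D = ⊕ₙ (Iⁿ ∩ sat(Iⁿ⁺¹))` of the Rees algebra
  let D : Ideal ↥S :=
    { carrier := { s : ↥S | ∀ n : ℕ, (↑s : R[X]).coeff n ∈ sat (I ^ (n + 1)) mI }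
      zero_mem' := fun n => by
        simp only [ZeroMemClass.coe_zero, Polynomial.coeff_zero]
        exact Ideal.zero_mem _
      add_mem' := fun {a b} ha hb n => by
        rw [AddMemClass.coe_add, Polynomial.coeff_add]
        exact Ideal.add_mem _ (ha n) (hb n)
      smul_mem' := fun c x hx n => by
        rw [smul_eq_mul, MulMemClass.coe_mul, Polynomial.coeff_mul]
        refine Ideal.sum_mem _ fun ab hab => ?_
        have h1 : (↑c : R[X]).coeff ab.1 ∈ I ^ ab.1 := c.2 ab.1
        have h2 : (↑x : R[X]).coeff ab.2 ∈ sat (I ^ (ab.2 + 1)) mI := hx ab.2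
        have h3 := mul_mem_sat h1 h2
        rwa [← pow_add, show ab.1 + (ab.2 + 1) = n + 1 by
          have := Finset.HasAntidiagonal.mem_antidiagonal.mp hab; omega] at h3 }
  have hDmem : ∀ s : ↥S, s ∈ D ↔ ∀ n : ℕ, (↑s : R[X]).coeff n ∈ sat (I ^ (n + 1)) mI :=
    fun s => Iff.rfl
  have hDfg : D.FG := IsNoetherian.noetherian D
  obtain ⟨G, hG⟩ := hDfg
  -- bihomogeneous components of elements of the Rees algebra
  have hpowhom : ∀ s : ℕ, (I ^ s).IsHomogeneous 𝒜 := pow_isHomogeneous 𝒜 hI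
  have hsathom : ∀ s : ℕ, (sat (I ^ s) mI).IsHomogeneous 𝒜 :=
    fun s => sat_isHomogeneous 𝒜 (hpowhom s) hmIhom
  let y : ↥S → ℕ → ℕ → R := fun g n δ => (DirectSum.decompose 𝒜 ((↑g : R[X]).coeff n) δ : R)
  have hymem : ∀ (g : ↥S) (n δ : ℕ), Polynomial.monomial n (y g n δ) ∈ S := by
    intro g n δ
    exact reesAlgebra.monomial_mem.mpr (hpowhom n δ (g.2 n))
  let comp : ↥S → ℕ → ℕ → ↥S := fun g n δ => ⟨Polynomial.monomial n (y g n δ), hymem g n δ⟩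
  let comps : Finset ↥S := G.biUnion fun g => (↑g : R[X]).support.biUnion fun n =>
    (DirectSum.decompose 𝒜 ((↑g : R[X]).coeff n)).support.image fun δ => comp g n δ
  have hmem_comps : ∀ c : ↥S, c ∈ comps ↔ ∃ g ∈ G, ∃ n ∈ (↑g : R[X]).support,
      ∃ δ ∈ (DirectSum.decompose 𝒜 ((↑g : R[X]).coeff n)).support, comp g n δ = c := by
    intro c
    show c ∈ Finset.biUnion G _ ↔ _
    simp only [Finset.mem_biUnion, Finset.mem_image]
  have hcompD : ∀ g : ↥S, g ∈ D → ∀ n δ : ℕ, comp g n δ ∈ D := by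
    intro g hg n δ
    have hg' := (hDmem g).mp hg
    rw [hDmem]
    intro n'
    show (Polynomial.monomial n (y g n δ)).coeff n' ∈ _
    rw [Polynomial.coeff_monomial]
    split_ifs with h
    · subst h
      exact hsathom _ δ (hg' _)
    · exact Ideal.zero_mem _
  have hsub : ∀ c ∈ comps, c ∈ D := by
    intro c hc
    rw [hmem_comps] at hc
    obtain ⟨g, hgG, n, _, δ, _, rfl⟩ := hc
    exact hcompD g (hG ▸ Ideal.subset_span hgG) n δ
  have hspan : Ideal.span (↑comps : Set ↥S) = D := by
    apply le_antisymm
    · rw [Ideal.span_le]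
      exact fun c hc => hsub c hc
    · rw [← hG, Ideal.span_le]
      intro g hgG
      have hgsum : g = ∑ n ∈ (↑g : R[X]).support,
          ∑ δ ∈ (DirectSum.decompose 𝒜 ((↑g : R[X]).coeff n)).support, comp g n δ := by
        apply Subtype.ext
        rw [AddSubmonoidClass.coe_finset_sum]
        have : ∀ n ∈ (↑g : R[X]).support,
            ((∑ δ ∈ (DirectSum.decompose 𝒜 ((↑g : R[X]).coeff n)).support, comp g n δ : ↥S) : R[X])
            = Polynomial.monomial n ((↑g : R[X]).coeff n) := by
          intro n _
          rw [AddSubmonoidClass.coe_finset_sum]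
          have : ∀ δ ∈ (DirectSum.decompose 𝒜 ((↑g : R[X]).coeff n)).support,
              ((comp g n δ : ↥S) : R[X]) = Polynomial.monomial n (y g n δ) := fun _ _ => rfl
          rw [Finset.sum_congr rfl this, ← map_sum (Polynomial.monomial n)]
          rw [DirectSum.sum_support_decompose 𝒜 ((↑g : R[X]).coeff n)]
        rw [Finset.sum_congr rfl this]
        exact (↑g : R[X]).as_sum_support
      rw [hgsum]
      refine Ideal.sum_mem _ fun n hn => Ideal.sum_mem _ fun δ hδ => Ideal.subset_span ?_
      rw [Finset.mem_coe, hmem_comps]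
      exact ⟨g, hgG, n, hn, δ, hδ, rfl⟩
  -- extract numerical bounds from the finitely many bihomogeneous generators
  let KeyP : ↥S → ℕ → ℕ → ℕ → Prop := fun c nc δc Nc =>
    (↑c : R[X]) = Polynomial.monomial nc ((↑c : R[X]).coeff nc) ∧
    ((↑c : R[X]).coeff nc ∈ 𝒜 δc) ∧
    ∀ p ∈ (mI ^ Nc : Ideal R), ((↑c : R[X]).coeff nc) * p ∈ I ^ (nc + 1)
  have hKey : ∀ c ∈ comps, ∃ nc δc Nc : ℕ, KeyP c nc δc Nc := by
    intro c hc
    have hcD := hsub c hc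
    rw [hmem_comps] at hc
    obtain ⟨g, hgG, n, _, δ, _, rfl⟩ := hc
    have hcoeff : ((comp g n δ : ↥S) : R[X]).coeff n = y g n δ := by
      show (Polynomial.monomial n (y g n δ)).coeff n = y g n δ
      rw [Polynomial.coeff_monomial_same]
    have hsat' : y g n δ ∈ sat (I ^ (n + 1)) mI := by
      have := (hDmem _).mp hcD n
      rwa [hcoeff] at this
    rw [mem_sat_iff] at hsat'
    obtain ⟨N, hN⟩ := hsat'
    refine ⟨n, δ, N, ?_, ?_, ?_⟩
    · rw [hcoeff]
    · rw [hcoeff]; exact SetLike.coe_mem _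
    · intro p hp
      rw [hcoeff]
      exact hN p hp
  let fB : ↥S → ℕ := fun c =>
    if h : ∃ nc δc Nc : ℕ, KeyP c nc δc Nc then
      max h.choose_spec.choose h.choose_spec.choose_spec.choose else 0
  let B : ℕ := comps.sup fB
  have hBound : ∀ c ∈ comps, ∃ nc δc Nc : ℕ, δc ≤ B ∧ Nc ≤ B ∧ KeyP c nc δc Nc := by
    intro c hc
    have h := hKey c hc
    refine ⟨h.choose, h.choose_spec.choose, h.choose_spec.choose_spec.choose, ?_, ?_,
      h.choose_spec.choose_spec.choose_spec⟩
    · have : fB c = max h.choose_spec.choose h.choose_spec.choose_spec.choose := dif_pos h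
      have h2 : fB c ≤ B := Finset.le_sup hc
      omega
    · have : fB c = max h.choose_spec.choose h.choose_spec.choose_spec.choose := dif_pos h
      have h2 : fB c ≤ B := Finset.le_sup hc
      omega
  refine ⟨B + B, ?_⟩
  intro n i x hi hxA hxI hxsat
  -- `monomial n x` lies in `D`, hence is a combination of the generators
  have hmx : (⟨Polynomial.monomial n x, reesAlgebra.monomial_mem.mpr hxI⟩ : ↥S) ∈ D := by
    rw [hDmem]
    intro n'
    show (Polynomial.monomial n x).coeff n' ∈ _
    rw [Polynomial.coeff_monomial]
    split_ifs with h
    · subst h; exact hxsat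
    · exact Ideal.zero_mem _
  rw [← hspan, Ideal.span, Submodule.mem_span_finset] at hmx
  obtain ⟨f, -, hf⟩ := hmx
  have hfx : (Polynomial.monomial n x : R[X]) = ∑ c ∈ comps, (↑(f c) : R[X]) * (↑c : R[X]) := by
    calc (Polynomial.monomial n x : R[X])
        = ((⟨Polynomial.monomial n x, reesAlgebra.monomial_mem.mpr hxI⟩ : ↥S) : R[X]) := rfl
      _ = ((∑ c ∈ comps, f c • c : ↥S) : R[X]) := by rw [hf]
      _ = ∑ c ∈ comps, (↑(f c) : R[X]) * (↑c : R[X]) := by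
          rw [AddSubmonoidClass.coe_finset_sum]
          exact Finset.sum_congr rfl fun c _ => by rw [smul_eq_mul, MulMemClass.coe_mul]
  have hxeq : x = ∑ c ∈ comps, ((↑(f c) : R[X]) * (↑c : R[X])).coeff n := by
    have := congrArg (fun p : R[X] => p.coeff n) hfx
    simpa [Polynomial.coeff_monomial_same, Polynomial.finset_sum_coeff] using this
  -- project onto internal degree `i`
  have hxdec : x = ∑ c ∈ comps,
      (DirectSum.decompose 𝒜 (((↑(f c) : R[X]) * (↑c : R[X])).coeff n) i : R) := by
    have h1 : ∀ z : R, (DirectSum.decompose 𝒜 z i : R) = GradedRing.proj 𝒜 i z := fun _ => rfl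
    calc x = (DirectSum.decompose 𝒜 x i : R) := (DirectSum.decompose_of_mem_same 𝒜 hxA).symm
      _ = _ := by
          conv_lhs => rw [hxeq]
          rw [h1, map_sum]
          exact Finset.sum_congr rfl fun c _ => (h1 _).symm
  rw [hxdec]
  refine Ideal.sum_mem _ fun c hc => ?_
  obtain ⟨nc, δc, Nc, hδB, hNB, hKmon, hKdeg, hKsat⟩ := hBound c hc
  by_cases hle : nc ≤ n
  · -- the coefficient of the product
    have hcoeffmul : ((↑(f c) : R[X]) * (↑c : R[X])).coeff n =
        (↑(f c) : R[X]).coeff (n - nc) * ((↑c : R[X]).coeff nc) := by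
      conv_lhs => rw [hKmon]
      rw [← Polynomial.C_mul_X_pow_eq_monomial, ← mul_assoc, Polynomial.coeff_mul_X_pow',
        if_pos hle, Polynomial.coeff_mul_C]
    rw [hcoeffmul]
    have hw : (↑(f c) : R[X]).coeff (n - nc) ∈ I ^ (n - nc) := (f c).2 (n - nc)
    have hδi : δc ≤ i := by omega
    rw [DirectSum.coe_decompose_mul_of_right_mem_of_le 𝒜 hKdeg hδi]
    -- absorption: the degree-(i - δc) component of an element of `I^(n-nc)` with
    -- i - δc ≥ d*(n-nc) + Nc lies in mI^Nc * I^(n-nc)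
    have habs : (DirectSum.decompose 𝒜 ((↑(f c) : R[X]).coeff (n - nc)) (i - δc) : R) ∈
        (mI ^ Nc * I ^ (n - nc) : Ideal R) := by
      have hspanpow : Ideal.span ((↑T : Set R) ^ (n - nc)) = I ^ (n - nc) := by
        rw [Ideal.span, ← Submodule.span_pow, ← Ideal.span, hTspan]
      have hdegs := set_pow_degrees 𝒜 (↑T : Set R) d hTdeg (n - nc)
      have hmul : d * (n - nc) ≤ d * n := Nat.mul_le_mul_left d (Nat.sub_le n nc)
      have hij : d * (n - nc) + Nc ≤ i - δc := by omega
      have := absorb 𝒜 hstd ((↑T : Set R) ^ (n - nc)) (d * (n - nc)) Nc hdegs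
        ((↑(f c) : R[X]).coeff (n - nc)) (hspanpow ▸ hw) (i - δc) hij
      rwa [hspanpow] at this
    -- conclude the term lies in I^(n+1)
    have hpoweq : I ^ (n - nc) * I ^ (nc + 1) = I ^ (n + 1) := by
      rw [← pow_add]
      congr 1
      omega
    refine Submodule.mul_induction_on habs ?_ ?_
    · intro a ha b hb
      have : a * b * ((↑c : R[X]).coeff nc) = b * (((↑c : R[X]).coeff nc) * a) := by ring
      rw [this]
      rw [← hpoweq]
      exact Ideal.mul_mem_mul hb (hKsat a ha)
    · intro z w hz hw2
      rw [add_mul]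
      exact Ideal.add_mem _ hz hw2
  · -- `nc > n` : the coefficient vanishes
    have hz : ((↑(f c) : R[X]) * (↑c : R[X])).coeff n = 0 := by
      conv_lhs => rw [hKmon]
      rw [← Polynomial.C_mul_X_pow_eq_monomial, ← mul_assoc, Polynomial.coeff_mul_X_pow',
        if_neg hle]
    rw [hz, DirectSum.decompose_zero]
    simpa using Ideal.zero_mem (I ^ (n + 1))

end Aux4
section Aux5
variable {k : Type} [Field k] {R : Type} [CommRing R] [Algebra k R]
variable (𝒜 : ℕ → Submodule k R) [GradedAlgebra 𝒜]

lemma swanson_bound (hstd : Algebra.adjoin k (𝒜 1 : Set R) = ⊤) [IsNoetherianRing R]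
    (I : Ideal R) (hI : I.IsHomogeneous 𝒜)
    (T : Finset R) (hTspan : Ideal.span (↑T : Set R) = I)
    (d : ℕ) (hTdeg : ∀ f ∈ T, ∃ δ ≤ d, f ∈ 𝒜 δ) :
    ∃ C : ℕ, ∀ n i : ℕ, ∀ x : R, d * n + C ≤ i → x ∈ 𝒜 i →
      x ∈ sat (I ^ n) (HomogeneousIdeal.irrelevant 𝒜).toIdeal → x ∈ I ^ n := by
  obtain ⟨C, hC⟩ := swanson_step 𝒜 hstd I hI T hTspan d hTdeg
  refine ⟨C, ?_⟩
  intro n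
  induction n with
  | zero =>
      intro i x _ _ _
      rw [pow_zero, Ideal.one_eq_top]
      exact Submodule.mem_top
  | succ n ih =>
      intro i x hi hxA hxsat
      have hxn : x ∈ I ^ n := by
        refine ih i x ?_ hxA ?_
        · have : d * n ≤ d * (n + 1) := Nat.mul_le_mul_left d (Nat.le_succ n)
          omega
        · exact sat_mono (Ideal.pow_le_pow_right (Nat.le_succ n)) _ hxsat
      refine hC n i x ?_ hxA hxn hxsat
      have : d * n ≤ d * (n + 1) := Nat.mul_le_mul_left d (Nat.le_succ n)
      omega

end Aux5
section Aux6
variable {k : Type} [Field k] {R : Type} [CommRing R] [Algebra k R]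
variable (𝒜 : ℕ → Submodule k R) [GradedAlgebra 𝒜]

lemma closure_one_or_pos (x : R) (hx : x ∈ Submonoid.closure (𝒜 1 : Set R)) :
    x = 1 ∨ ∃ ℓ : ℕ, 0 < ℓ ∧ x ∈ 𝒜 ℓ := by
  induction hx using Submonoid.closure_induction with
  | mem a ha => exact Or.inr ⟨1, Nat.one_pos, ha⟩
  | one => exact Or.inl rfl
  | mul a b _ _ iha ihb =>
      rcases iha with rfl | ⟨ℓa, hℓa, ha⟩
      · rcases ihb with rfl | ⟨ℓb, hℓb, hb⟩
        · exact Or.inl (by rw [one_mul])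
        · exact Or.inr ⟨ℓb, hℓb, by rwa [one_mul]⟩
      · rcases ihb with rfl | ⟨ℓb, hℓb, hb⟩
        · exact Or.inr ⟨ℓa, hℓa, by rwa [mul_one]⟩
        · exact Or.inr ⟨ℓa + ℓb, by omega, SetLike.mul_mem_graded ha hb⟩

lemma grade_zero_le_span_one (hstd : Algebra.adjoin k (𝒜 1 : Set R) = ⊤) :
    𝒜 0 ≤ Submodule.span k ({1} : Set R) := by
  intro x hx
  have hx' : x ∈ Submodule.span k (Submonoid.closure (𝒜 1 : Set R) : Set R) := by
    rw [← Algebra.adjoin_eq_span, hstd]; trivial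
  have key : ∀ y ∈ Submodule.span k (Submonoid.closure (𝒜 1 : Set R) : Set R),
      (DirectSum.decompose 𝒜 y 0 : R) ∈ Submodule.span k ({1} : Set R) := by
    intro y hy
    induction hy using Submodule.span_induction with
    | mem a ha =>
        rcases closure_one_or_pos 𝒜 a ha with rfl | ⟨ℓ, hℓ, haℓ⟩
        · rw [DirectSum.decompose_of_mem_same 𝒜 (SetLike.one_mem_graded 𝒜)]
          exact Submodule.mem_span_singleton_self 1
        · rw [DirectSum.decompose_of_mem_ne 𝒜 haℓ (by omega)]
          exact Submodule.zero_mem _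
    | zero => rw [DirectSum.decompose_zero]; exact Submodule.zero_mem _
    | add a b _ _ iha ihb =>
        rw [DirectSum.decompose_add]
        exact Submodule.add_mem _ iha ihb
    | smul c a _ iha =>
        have : (DirectSum.decompose 𝒜 (c • a) 0 : R) = c • (DirectSum.decompose 𝒜 a 0 : R) := by
          rw [DirectSum.decompose_smul]; rfl
        rw [this]
        exact Submodule.smul_mem _ c iha
  have := key x hx'
  rwa [DirectSum.decompose_of_mem_same 𝒜 hx] at this

lemma fd_finset_sum {ι : Type*} (s : Finset ι) (p : ι → Submodule k R)
    (hp : ∀ i ∈ s, FiniteDimensional k (p i)) :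
    FiniteDimensional k (∑ i ∈ s, p i : Submodule k R) := by
  classical
  induction s using Finset.induction_on with
  | empty =>
      rw [Finset.sum_empty]
      have : ((0 : Submodule k R)) = ⊥ := rfl
      rw [this]
      infer_instance
  | insert _ _ ha ih =>
      rename_i a t
      rw [Finset.sum_insert ha, Submodule.add_eq_sup]
      haveI := hp a (Finset.mem_insert_self a t)
      haveI := ih fun i hi => hp i (Finset.mem_insert_of_mem hi)
      infer_instance

/-- Each graded piece of a Noetherian standard graded algebra is finite dimensional. -/
lemma fd_pieces (hstd : Algebra.adjoin k (𝒜 1 : Set R) = ⊤) [IsNoetherianRing R] :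
    ∀ i : ℕ, FiniteDimensional k (𝒜 i) := by
  classical
  have hmfg : ((HomogeneousIdeal.irrelevant 𝒜).toIdeal).FG :=
    IsNoetherian.noetherian _
  obtain ⟨F, hFspan, hFmem⟩ := homog_gens 𝒜 (HomogeneousIdeal.irrelevant 𝒜).isHomogeneous hmfg
  let δ : R → ℕ := fun f => if h : ∃ d : ℕ, f ∈ 𝒜 d then h.choose else 0
  have hδ : ∀ f ∈ F, f ∈ 𝒜 (δ f) := by
    intro f hf
    obtain ⟨-, hd⟩ := hFmem f hf
    simpa only [δ, dif_pos hd] using hd.choose_spec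
  intro i
  induction i using Nat.strong_induction_on with
  | _ i ih =>
      rcases Nat.eq_zero_or_pos i with rfl | hi
      · exact Submodule.finiteDimensional_of_le (grade_zero_le_span_one 𝒜 hstd)
      · -- 𝒜 i is contained in a finite sum of products
        have hle : 𝒜 i ≤ ∑ f ∈ F, (if 1 ≤ δ f ∧ δ f ≤ i
            then (𝒜 (i - δ f) * Submodule.span k ({f} : Set R)) else ⊥) := by
          intro x hx
          have hxm : x ∈ (HomogeneousIdeal.irrelevant 𝒜).toIdeal := by
            show x ∈ (HomogeneousIdeal.irrelevant 𝒜)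
            rw [HomogeneousIdeal.mem_irrelevant_iff]
            exact DirectSum.decompose_of_mem_ne 𝒜 hx (by omega)
          rw [← hFspan, Ideal.span, Submodule.mem_span_finset] at hxm
          obtain ⟨c, -, hc⟩ := hxm
          have hxdec : x = ∑ f ∈ F, (DirectSum.decompose 𝒜 (c f • f) i : R) := by
            have h1 : ∀ z : R, (DirectSum.decompose 𝒜 z i : R) = GradedRing.proj 𝒜 i z :=
              fun _ => rfl
            calc x = (DirectSum.decompose 𝒜 x i : R) :=
                  (DirectSum.decompose_of_mem_same 𝒜 hx).symm
              _ = _ := by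
                  conv_lhs => rw [← hc]
                  rw [h1, map_sum]
                  exact Finset.sum_congr rfl fun f _ => (h1 _).symm
          rw [hxdec]
          refine Submodule.sum_mem _ fun f hf => ?_
          refine (Finset.single_le_sum (f := fun f => if 1 ≤ δ f ∧ δ f ≤ i
            then (𝒜 (i - δ f) * Submodule.span k ({f} : Set R)) else ⊥)
            (fun i _ => zero_le) hf) ?_
          by_cases h1 : 1 ≤ δ f ∧ δ f ≤ i
          · rw [if_pos h1, smul_eq_mul,
              DirectSum.coe_decompose_mul_of_right_mem_of_le 𝒜 (hδ f hf) h1.2]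
            exact Submodule.mul_mem_mul (SetLike.coe_mem _)
              (Submodule.mem_span_singleton_self f)
          · rw [if_neg h1]
            rcases Nat.lt_or_ge i (δ f) with h2 | h2
            · rw [smul_eq_mul,
                DirectSum.coe_decompose_mul_of_right_mem_of_not_le 𝒜 (hδ f hf) (by omega)]
              exact Submodule.zero_mem _
            · -- then δ f = 0, so f = 0
              have hδ0 : δ f = 0 := by omega
              have hf0 : f = 0 := by
                have hfm : f ∈ (HomogeneousIdeal.irrelevant 𝒜).toIdeal := (hFmem f hf).1
                have : (DirectSum.decompose 𝒜 f 0 : R) = 0 := hfm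
                rwa [← hδ0, DirectSum.decompose_of_mem_same 𝒜 (hδ f hf)] at this
              rw [hf0, smul_zero, DirectSum.decompose_zero]
              exact Submodule.zero_mem _
        haveI : FiniteDimensional k (∑ f ∈ F, (if 1 ≤ δ f ∧ δ f ≤ i
            then (𝒜 (i - δ f) * Submodule.span k ({f} : Set R)) else ⊥) : Submodule k R) := by
          refine fd_finset_sum _ _ fun f hf => ?_
          by_cases h1 : 1 ≤ δ f ∧ δ f ≤ i
          · rw [if_pos h1]
            haveI : FiniteDimensional k (𝒜 (i - δ f)) := ih _ (by omega)
            have hfg : (𝒜 (i - δ f) * Submodule.span k ({f} : Set R)).FG :=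
              Submodule.FG.mul ((Submodule.fg_iff_finiteDimensional _).mpr this)
                (Submodule.fg_span_singleton f)
            exact (Submodule.fg_iff_finiteDimensional _).mp hfg
          · rw [if_neg h1]
            infer_instance
        exact Submodule.finiteDimensional_of_le hle

end Aux6
section Aux7
variable {k : Type} [Field k] {R : Type} [CommRing R] [Algebra k R]
variable (𝒜 : ℕ → Submodule k R) [GradedAlgebra 𝒜]

lemma proj_zero_of_not_mem (p : ℕ → Submodule k R) (hp : ∀ i, p i ≤ 𝒜 i)
    (s : Finset ℕ) : ∀ x ∈ (∑ i ∈ s, p i : Submodule k R), ∀ j ∉ s,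
      (DirectSum.decompose 𝒜 x j : R) = 0 := by
  classical
  induction s using Finset.induction_on with
  | empty =>
      intro x hx j _
      rw [Finset.sum_empty] at hx
      have : x = 0 := hx
      rw [this, DirectSum.decompose_zero]
      rfl
  | insert _ _ ha ih =>
      rename_i a t
      intro x hx j hj
      rw [Finset.sum_insert ha, Submodule.add_eq_sup, Submodule.mem_sup] at hx
      obtain ⟨y, hy, z, hz, rfl⟩ := hx
      rw [DirectSum.decompose_add, DirectSum.add_apply, AddMemClass.coe_add]
      have h1 : (DirectSum.decompose 𝒜 y j : R) = 0 :=
        DirectSum.decompose_of_mem_ne 𝒜 (hp a hy) (by simp at hj; omega)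
      have h2 : (DirectSum.decompose 𝒜 z j : R) = 0 :=
        ih z hz j (fun hjt => hj (Finset.mem_insert_of_mem hjt))
      rw [h1, h2, add_zero]

lemma proj_mem_of_mem_sum (p : ℕ → Submodule k R) (hp : ∀ i, p i ≤ 𝒜 i)
    (s : Finset ℕ) : ∀ x ∈ (∑ i ∈ s, p i : Submodule k R), ∀ j,
      (DirectSum.decompose 𝒜 x j : R) ∈ p j := by
  classical
  induction s using Finset.induction_on with
  | empty =>
      intro x hx j
      rw [Finset.sum_empty] at hx
      have : x = 0 := hx
      rw [this, DirectSum.decompose_zero]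
      exact Submodule.zero_mem _
  | insert _ _ ha ih =>
      rename_i a t
      intro x hx j
      rw [Finset.sum_insert ha, Submodule.add_eq_sup, Submodule.mem_sup] at hx
      obtain ⟨y, hy, z, hz, rfl⟩ := hx
      rw [DirectSum.decompose_add, DirectSum.add_apply, AddMemClass.coe_add]
      refine Submodule.add_mem _ ?_ (ih z hz j)
      by_cases hja : j = a
      · subst hja
        rw [DirectSum.decompose_of_mem_same 𝒜 (hp j hy)]
        exact hy
      · rw [DirectSum.decompose_of_mem_ne 𝒜 (hp a hy) (fun h => hja h.symm)]
        exact Submodule.zero_mem _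

lemma finrank_sum_pieces (p : ℕ → Submodule k R) (hp : ∀ i, p i ≤ 𝒜 i)
    (hfd : ∀ i, FiniteDimensional k (p i)) (s : Finset ℕ) :
    Module.finrank k (∑ i ∈ s, p i : Submodule k R) = ∑ i ∈ s, Module.finrank k (p i) := by
  classical
  induction s using Finset.induction_on with
  | empty =>
      rw [Finset.sum_empty, Finset.sum_empty]
      have : ((0 : Submodule k R)) = ⊥ := rfl
      rw [this, finrank_bot]
  | insert _ _ ha ih =>
      rename_i a t
      rw [Finset.sum_insert ha, Finset.sum_insert ha, Submodule.add_eq_sup]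
      haveI := hfd a
      haveI : FiniteDimensional k (∑ i ∈ t, p i : Submodule k R) :=
        fd_finset_sum t p fun i _ => hfd i
      have hdisj : (p a ⊓ ∑ i ∈ t, p i : Submodule k R) = ⊥ := by
        rw [eq_bot_iff]
        intro x hx
        have hx1 : x ∈ p a := hx.1
        have hx2 : x ∈ (∑ i ∈ t, p i : Submodule k R) := hx.2
        have h0 : (DirectSum.decompose 𝒜 x a : R) = 0 :=
          proj_zero_of_not_mem 𝒜 p hp t x hx2 a ha
        rw [DirectSum.decompose_of_mem_same 𝒜 (hp a hx1)] at h0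
        simp [h0]
      have := Submodule.finrank_sup_add_finrank_inf_eq (p a) (∑ i ∈ t, p i : Submodule k R)
      rw [hdisj, finrank_bot, add_zero] at this
      rw [this, ih]

end Aux7
section Aux8
variable {k : Type} [Field k] {R : Type} [CommRing R] [Algebra k R]

lemma sum_le_submodule {M : Type*} [AddCommMonoid M] [Module k M] {ι : Type*} (s : Finset ι)
    (p : ι → Submodule k M) (q : Submodule k M) (h : ∀ i ∈ s, p i ≤ q) :
    (∑ i ∈ s, p i : Submodule k M) ≤ q := by
  classical
  induction s using Finset.induction_on with
  | empty => rw [Finset.sum_empty]; exact bot_le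
  | insert _ _ ha ih =>
      rename_i a t
      rw [Finset.sum_insert ha, Submodule.add_eq_sup]
      exact sup_le (h a (Finset.mem_insert_self a t)) (ih fun i hi => h i (Finset.mem_insert_of_mem hi))

lemma restrictScalars_finrank {M : Type*} [AddCommGroup M] [Module R M] [Module k M]
    [IsScalarTower k R M] (H : Submodule R M) :
    Module.finrank k (Submodule.restrictScalars k H) = Module.finrank k H := by
  have e : (Submodule.restrictScalars k H) ≃ₗ[k] H :=
    { toFun := fun x => ⟨x.1, x.2⟩
      invFun := fun x => ⟨x.1, x.2⟩
      map_add' := fun _ _ => rfl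
      map_smul' := fun _ _ => rfl
      left_inv := fun _ => rfl
      right_inv := fun _ => rfl }
  exact e.finrank_eq

end Aux8

set_option maxHeartbeats 1000000 in
theorem statement13 (k : Type) [Field k]
    (R : Type) [CommRing R] [IsDomain R] [Algebra k R]
    (𝒜 : ℕ → Submodule k R) [GradedAlgebra 𝒜]
    (hFG : Algebra.FiniteType k R)
    (hstd : Algebra.adjoin k (𝒜 1 : Set R) = ⊤)
    (m : Ideal R) (hm : m = (HomogeneousIdeal.irrelevant 𝒜).toIdeal)
    (hdepth : ∃ a b : R, a ∈ m ∧ b ∈ m ∧ RingTheory.Sequence.IsRegular R [a, b])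
    (I : Ideal R) (hI : I.IsHomogeneous 𝒜) (hht : 1 ≤ idealHeight I) :
    ∃ e : ℕ, 0 < e ∧
      (∃ s : Finset R, (∀ f ∈ s, ∃ i < e, f ∈ 𝒜 i) ∧ I = Ideal.span ↑s) ∧
      (∀ n : ℕ, 1 ≤ n → ∀ i : ℕ, e * n ≤ i →
        piece 𝒜 (sat (I ^ n) m) i = piece 𝒜 (I ^ n) i) ∧
      (∀ n : ℕ, 1 ≤ n →
        (Module.finrank k (H0 (M := R ⧸ I ^ n) m) : ℤ) =
          (∑ i ∈ Finset.range (e * n + 1),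
            (Module.finrank k (piece 𝒜 (sat (I ^ n) m) i) : ℤ)) -
          (∑ i ∈ Finset.range (e * n + 1),
            (Module.finrank k (piece 𝒜 (I ^ n) i) : ℤ))) := by
  classical
  subst hm
  haveI : Algebra.FiniteType k R := hFG
  haveI hNoeth : IsNoetherianRing R := Algebra.FiniteType.isNoetherianRing k R
  have hfd : ∀ i, FiniteDimensional k (𝒜 i) := fd_pieces 𝒜 hstd
  -- homogeneous generators of I
  obtain ⟨T, hTspan, hTmem⟩ := homog_gens 𝒜 hI (IsNoetherian.noetherian I)
  let δf : R → ℕ := fun f => if h : ∃ d : ℕ, f ∈ 𝒜 d then h.choose else 0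
  let d : ℕ := T.sup δf
  have hTdeg : ∀ f ∈ T, ∃ δ ≤ d, f ∈ 𝒜 δ := by
    intro f hf
    obtain ⟨-, hd⟩ := hTmem f hf
    refine ⟨δf f, Finset.le_sup hf, ?_⟩
    simpa only [δf, dif_pos hd] using hd.choose_spec
  obtain ⟨C, hC⟩ := swanson_bound 𝒜 hstd I hI T hTspan d hTdeg
  set e : ℕ := d + C + 1 with he
  -- the key vanishing statement
  have key : ∀ n : ℕ, 1 ≤ n → ∀ j : ℕ, e * n ≤ j → ∀ x : R, x ∈ 𝒜 j →
      x ∈ sat (I ^ n) (HomogeneousIdeal.irrelevant 𝒜).toIdeal → x ∈ I ^ n := by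
    intro n hn j hj x hxA hxQ
    refine hC n j x ?_ hxA hxQ
    have h1 : C ≤ C * n := Nat.le_mul_of_pos_right C (by omega)
    have h2 : e * n = d * n + C * n + n := by rw [he]; ring
    omega
  refine ⟨e, by omega, ⟨T, ?_, hTspan.symm⟩, ?_, ?_⟩
  · intro f hf
    obtain ⟨δ, hδd, hδ⟩ := hTdeg f hf
    exact ⟨δ, by omega, hδ⟩
  · -- the saturation statement
    intro n hn i hi
    apply le_antisymm
    · rintro x ⟨hx1, hx2⟩
      exact ⟨key n hn i hi x hx2 hx1, hx2⟩
    · rintro x ⟨hx1, hx2⟩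
      exact ⟨self_le_sat _ _ hx1, hx2⟩
  · -- the length formula
    intro n hn
    set mI : Ideal R := (HomogeneousIdeal.irrelevant 𝒜).toIdeal with hmI
    set P : Ideal R := I ^ n with hP
    set Q : Ideal R := sat P mI with hQ
    have hPhom : P.IsHomogeneous 𝒜 := pow_isHomogeneous 𝒜 hI n
    have hQhom : Q.IsHomogeneous 𝒜 :=
      sat_isHomogeneous 𝒜 hPhom (HomogeneousIdeal.irrelevant 𝒜).isHomogeneous
    set L : ℕ := e * n with hL
    set pS : ℕ → Submodule k R := fun i => piece 𝒜 Q i with hpS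
    set pI : ℕ → Submodule k R := fun i => piece 𝒜 P i with hpI
    have hpSle : ∀ i, pS i ≤ 𝒜 i := fun i => inf_le_right
    have hpIle : ∀ i, pI i ≤ 𝒜 i := fun i => inf_le_right
    haveI hfdS : ∀ i, FiniteDimensional k (pS i) := by
      intro i
      haveI := hfd i
      exact Submodule.finiteDimensional_of_le (hpSle i)
    haveI hfdI : ∀ i, FiniteDimensional k (pI i) := by
      intro i
      haveI := hfd i
      exact Submodule.finiteDimensional_of_le (hpIle i)
    set V : Submodule k R := ∑ i ∈ Finset.range (L + 1), pS i with hV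
    set W : Submodule k R := ∑ i ∈ Finset.range (L + 1), pI i with hW
    haveI hVfd : FiniteDimensional k V := fd_finset_sum _ _ fun i _ => hfdS i
    have hWle : W ≤ V := by
      refine Finset.sum_le_sum fun i _ => ?_
      rintro x ⟨hx1, hx2⟩
      exact ⟨self_le_sat _ _ hx1, hx2⟩
    -- the quotient map restricted to V
    let φ : V →ₗ[k] (R ⧸ P) := (Ideal.Quotient.mkₐ k P).toLinearMap.comp V.subtype
    have hφ : ∀ v : V, φ v = Ideal.Quotient.mk P (v : R) := fun v => rfl
    -- membership in H0
    have htorsmono : Monotone (fun N : ℕ =>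
        Submodule.torsionBySet R (R ⧸ P) ((mI ^ N : Ideal R) : Set R)) := by
      intro N N' hNN'
      exact Submodule.torsionBySet_le_torsionBySet_of_subset
        (Ideal.pow_le_pow_right hNN')
    have hmemH0 : ∀ z : R ⧸ P, z ∈ H0 (M := R ⧸ P) mI ↔
        ∃ N : ℕ, ∀ a ∈ (mI ^ N : Ideal R), a • z = 0 := by
      intro z
      rw [H0, Submodule.mem_iSup_of_directed _ htorsmono.directed_le]
      refine exists_congr fun N => ?_
      rw [Submodule.mem_torsionBySet_iff]
      constructor
      · intro h a ha; exact h ⟨a, ha⟩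
      · intro h a; exact h a.1 a.2
    -- range of φ
    have hrange : LinearMap.range φ = Submodule.restrictScalars k (H0 (M := R ⧸ P) mI) := by
      apply le_antisymm
      · rintro _ ⟨⟨v, hv⟩, rfl⟩
        have hvQ : v ∈ Q := by
          have hVQ : V ≤ Submodule.restrictScalars k Q :=
            sum_le_submodule _ _ _ fun i _ => inf_le_left
          exact hVQ hv
        rw [hQ, mem_sat_iff] at hvQ
        obtain ⟨N, hN⟩ := hvQ
        rw [Submodule.restrictScalars_mem, hmemH0]
        refine ⟨N, fun a ha => ?_⟩
        rw [hφ]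
        have : a • (Ideal.Quotient.mk P v) = Ideal.Quotient.mk P (a * v) := rfl
        rw [this, Ideal.Quotient.eq_zero_iff_mem, mul_comm]
        exact hN a ha
      · intro z hz
        rw [Submodule.restrictScalars_mem, hmemH0] at hz
        obtain ⟨N, hN⟩ := hz
        obtain ⟨v, rfl⟩ := Ideal.Quotient.mk_surjective z
        have hvQ : v ∈ Q := by
          rw [hQ, mem_sat_iff]
          refine ⟨N, fun p hp => ?_⟩
          have := hN p hp
          have h2 : p • (Ideal.Quotient.mk P v) = Ideal.Quotient.mk P (p * v) := rfl
          rw [h2, Ideal.Quotient.eq_zero_iff_mem] at this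
          rwa [mul_comm]
        -- split v into components of low and high degree
        set v' : R := ∑ j ∈ (DirectSum.decompose 𝒜 v).support.filter (· ≤ L),
          (DirectSum.decompose 𝒜 v j : R) with hv'
        set v'' : R := ∑ j ∈ (DirectSum.decompose 𝒜 v).support.filter (¬ · ≤ L),
          (DirectSum.decompose 𝒜 v j : R) with hv''
        have hsplit : v = v' + v'' := by
          rw [hv', hv'', Finset.sum_filter_add_sum_filter_not]
          exact (DirectSum.sum_support_decompose 𝒜 v).symm
        have hv''P : v'' ∈ P := by
          refine Ideal.sum_mem _ fun j hj => ?_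
          rw [Finset.mem_filter] at hj
          refine key n hn j (by omega) _ (SetLike.coe_mem _) ?_
          exact hQhom j hvQ
        have hv'V : v' ∈ V := by
          refine Submodule.sum_mem _ fun j hj => ?_
          rw [Finset.mem_filter] at hj
          have h1 : (DirectSum.decompose 𝒜 v j : R) ∈ pS j :=
            ⟨hQhom j hvQ, SetLike.coe_mem _⟩
          refine Finset.single_le_sum (f := pS) (fun i _ => zero_le)
            (Finset.mem_range.mpr (by omega)) h1
        refine ⟨⟨v', hv'V⟩, ?_⟩
        rw [hφ]
        show Ideal.Quotient.mk P v' = Ideal.Quotient.mk P v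
        rw [hsplit, map_add, Ideal.Quotient.eq_zero_iff_mem.mpr hv''P, add_zero]
    -- kernel of φ
    have hker : LinearMap.ker φ = Submodule.comap V.subtype W := by
      ext ⟨v, hv⟩
      rw [LinearMap.mem_ker, Submodule.mem_comap, hφ]
      show Ideal.Quotient.mk P v = 0 ↔ _
      rw [Ideal.Quotient.eq_zero_iff_mem]
      constructor
      · intro hvP
        have hsupp : ∀ j ∈ (DirectSum.decompose 𝒜 v).support, j ∈ Finset.range (L + 1) := by
          intro j hj
          by_contra hjn
          have := proj_zero_of_not_mem 𝒜 pS hpSle (Finset.range (L + 1)) v hv j hjn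
          rw [DFinsupp.mem_support_iff] at hj
          exact hj (by ext; simpa using this)
        have hvsum : v = ∑ j ∈ (DirectSum.decompose 𝒜 v).support,
            (DirectSum.decompose 𝒜 v j : R) := (DirectSum.sum_support_decompose 𝒜 v).symm
        have hfinal : (∑ j ∈ (DirectSum.decompose 𝒜 v).support,
            (DirectSum.decompose 𝒜 v j : R)) ∈ W := by
          refine Submodule.sum_mem _ fun j hj => ?_
          have h1 : (DirectSum.decompose 𝒜 v j : R) ∈ pI j := ⟨hPhom j hvP, SetLike.coe_mem _⟩
          exact Finset.single_le_sum (f := pI) (fun i _ => zero_le) (hsupp j hj) h1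
        rwa [← hvsum] at hfinal
      · intro hvW
        have : W ≤ Submodule.restrictScalars k P :=
          sum_le_submodule _ _ _ fun i _ => inf_le_left
        exact this hvW
    -- dimension count
    have h1 : Module.finrank k V =
        Module.finrank k (LinearMap.range φ) + Module.finrank k (LinearMap.ker φ) :=
      (LinearMap.finrank_range_add_finrank_ker φ).symm
    have h2 : Module.finrank k (LinearMap.range φ) =
        Module.finrank k (H0 (M := R ⧸ P) mI) := by
      rw [hrange]
      exact restrictScalars_finrank _
    have h3 : Module.finrank k (LinearMap.ker φ) = Module.finrank k W := by
      rw [hker]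
      exact (Submodule.comapSubtypeEquivOfLe hWle).finrank_eq
    have h4 : Module.finrank k V = ∑ i ∈ Finset.range (L + 1), Module.finrank k (pS i) :=
      finrank_sum_pieces 𝒜 pS hpSle hfdS _
    have h5 : Module.finrank k W = ∑ i ∈ Finset.range (L + 1), Module.finrank k (pI i) :=
      finrank_sum_pieces 𝒜 pI hpIle hfdI _
    have hnat : ∑ i ∈ Finset.range (L + 1), Module.finrank k (pS i) =
        Module.finrank k (H0 (M := R ⧸ P) mI) +
          ∑ i ∈ Finset.range (L + 1), Module.finrank k (pI i) := by
      omega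
    have hcast1 : (∑ i ∈ Finset.range (L + 1), (Module.finrank k (pS i) : ℤ)) =
        ((∑ i ∈ Finset.range (L + 1), Module.finrank k (pS i) : ℕ) : ℤ) := by
      push_cast
      rfl
    have hcast2 : (∑ i ∈ Finset.range (L + 1), (Module.finrank k (pI i) : ℤ)) =
        ((∑ i ∈ Finset.range (L + 1), Module.finrank k (pI i) : ℕ) : ℤ) := by
      push_cast
      rfl
    show (Module.finrank k (H0 (M := R ⧸ P) mI) : ℤ) =
        (∑ i ∈ Finset.range (L + 1), (Module.finrank k (pS i) : ℤ)) -
          (∑ i ∈ Finset.range (L + 1), (Module.finrank k (pI i) : ℤ))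
    rw [hcast1, hcast2]
    omega
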